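/- Let 0 < r < 1 and let h_r be the unique solution in (0, ∞) of (1 - r)·e^{-h} + e^{-(1-r)h} = r. Then the function h ↦ (1 + e^{-r h})/(1 + e^{-h}) on (0, ∞) attains its maximum value r·e^{(1-r)h_r} at h = h_r, and this is the unique maximizer. -/

import Mathlib

theorem stmt_1 (r hr : ℝ) (hr0 : 0 < r) (hr1 : r < 1) (hhr : 0 < hr)
    (heq : (1 - r) * Real.exp (-hr) + Real.exp (-(1 - r) * hr) = r) :
    (1 + Real.exp (-r * hr)) / (1 + Real.exp (-hr)) = r * Real.exp ((1 - r) * hr) ∧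
    ∀ h : ℝ, 0 < h → h ≠ hr →
      (1 + Real.exp (-r * h)) / (1 + Real.exp (-h)) < r * Real.exp ((1 - r) * hr) := by
  set M : ℝ := r * Real.exp ((1 - r) * hr) with hMdef
  have E1 : Real.exp (-hr) * Real.exp ((1 - r) * hr) = Real.exp (-r * hr) := by
    rw [← Real.exp_add]; ring_nf
  have E2 : Real.exp (-(1 - r) * hr) * Real.exp ((1 - r) * hr) = 1 := by
    rw [← Real.exp_add]; ring_nf; exact Real.exp_zero
  have key : 1 + Real.exp (-r * hr) = M * (1 + Real.exp (-hr)) := by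
    rw [hMdef]
    linear_combination Real.exp ((1 - r) * hr) * heq - E1 - E2
  have hden : ∀ x : ℝ, (0:ℝ) < 1 + Real.exp (-x) := fun x => by positivity
  constructor
  · rw [div_eq_iff (ne_of_gt (hden hr))]
    exact key
  · -- the function g
    set g : ℝ → ℝ := fun h => M * (1 + Real.exp (-h)) - (1 + Real.exp (-r * h)) with hg
    have hderiv : ∀ x : ℝ, HasDerivAt g (r * Real.exp (-r * x) - M * Real.exp (-x)) x := by
      intro x
      have h1 : HasDerivAt (fun h : ℝ => Real.exp (-h)) (-Real.exp (-x)) x := by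
        simpa using ((hasDerivAt_id x).neg.exp)
      have h2 : HasDerivAt (fun h : ℝ => Real.exp (-r * h)) (-r * Real.exp (-r * x)) x := by
        have hl : HasDerivAt (fun h : ℝ => -r * h) (-r) x := by
          simpa using (hasDerivAt_id x).const_mul (-r)
        simpa [mul_comm] using hl.exp
      have := (((h1.const_add 1).const_mul M).sub (h2.const_add 1))
      exact this.congr_deriv (by ring)
    have hgc : Continuous g := by
      fun_prop
    have hdsign : ∀ x : ℝ, r * Real.exp (-r * x) - M * Real.exp (-x)
        = Real.exp (-x) * (r * Real.exp ((1 - r) * x) - M) := by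
      intro x
      have : Real.exp (-x) * Real.exp ((1 - r) * x) = Real.exp (-r * x) := by
        rw [← Real.exp_add]; ring_nf
      rw [mul_sub]
      rw [show Real.exp (-x) * (r * Real.exp ((1 - r) * x))
          = r * (Real.exp (-x) * Real.exp ((1 - r) * x)) by ring, this]
      ring
    have hanti : StrictAntiOn g (Set.Icc 0 hr) := by
      apply strictAntiOn_of_deriv_neg (convex_Icc 0 hr) hgc.continuousOn
      intro x hx
      rw [interior_Icc] at hx
      rw [(hderiv x).deriv, hdsign]
      apply mul_neg_of_pos_of_neg (Real.exp_pos _)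
      have : (1 - r) * x < (1 - r) * hr :=
        mul_lt_mul_of_pos_left hx.2 (by linarith)
      have := Real.exp_lt_exp.mpr this
      rw [hMdef]
      nlinarith [this]
    have hmono : StrictMonoOn g (Set.Ici hr) := by
      apply strictMonoOn_of_deriv_pos (convex_Ici hr) hgc.continuousOn
      intro x hx
      rw [interior_Ici] at hx
      rw [(hderiv x).deriv, hdsign]
      apply mul_pos (Real.exp_pos _)
      have : (1 - r) * hr < (1 - r) * x :=
        mul_lt_mul_of_pos_left hx (by linarith)
      have := Real.exp_lt_exp.mpr this
      rw [hMdef]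
      nlinarith [this]
    have hghr : g hr = 0 := by
      simp only [hg]
      linarith [key]
    intro h hh hne
    have hgpos : 0 < g h := by
      rcases lt_or_gt_of_ne hne with hlt | hgt
      · have := hanti (Set.mem_Icc.mpr ⟨le_of_lt hh, le_of_lt hlt⟩)
          (Set.mem_Icc.mpr ⟨le_of_lt hhr, le_refl hr⟩) hlt
        rw [hghr] at this
        linarith
      · have := hmono (Set.mem_Ici.mpr (le_refl hr))
          (Set.mem_Ici.mpr (le_of_lt hgt)) hgt
        rw [hghr] at this
        linarith
    rw [div_lt_iff₀ (hden h)]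
    simp only [hg] at hgpos
    linarith
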